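/- With all p_i = 2 and q_i = 1 for 3 ≤ i ≤ k (k ≥ 3), the generalized Frame-Stewart number satisfies G_k(n) = Σ_{m=0}^{j−1} binom(k+m−3, k−3)·2^m + (n − binom(k+j−3, k−2))·2^j whenever binom(k+j−3, k−2) < n ≤ binom(k+j−2, k−2); in particular these numbers coincide with the classical Frame-Stewart numbers S_k(n). -/

import Mathlib

open Finset

namespace FSaux

/-- upper boundary of interval `j`. -/
def bd (k j : ℕ) : ℕ := (k + j - 2).choose (k - 2)

/-- lower boundary (exclusive) of interval `j`. -/
def pb (k j : ℕ) : ℕ := (k + j - 3).choose (k - 2)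

noncomputable def jix (k i : ℕ) : ℕ := sInf {j | i ≤ bd k j}

noncomputable def dd (k i : ℕ) : ℕ := 2 ^ jix k i

noncomputable def F (k n : ℕ) : ℕ := ∑ i ∈ Icc 1 n, dd k i

lemma bd_mono {k} {j j' : ℕ} (h : j ≤ j') : bd k j ≤ bd k j' :=
  Nat.choose_le_choose _ (by omega)

lemma bd_zero {k : ℕ} (hk : 3 ≤ k) : bd k 0 = 1 := by
  unfold bd
  have h : k + 0 - 2 = k - 2 := by omega
  rw [h, Nat.choose_self]

lemma bd_pos {k j : ℕ} (hk : 3 ≤ k) : 1 ≤ bd k j := by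
  calc 1 = bd k 0 := (bd_zero hk).symm
  _ ≤ bd k j := bd_mono (Nat.zero_le _)

lemma pb_succ {k j : ℕ} : pb k (j + 1) = bd k j := by
  have h : k + (j + 1) - 3 = k + j - 2 := by omega
  unfold pb bd; rw [h]

lemma pb_zero {k : ℕ} (hk : 3 ≤ k) : pb k 0 = 0 := by
  unfold pb
  exact Nat.choose_eq_zero_of_lt (by omega)

/-- Pascal: boundary = previous boundary + block size. -/
lemma bd_eq_pb_add {k j : ℕ} (hk : 3 ≤ k) :
    bd k j = pb k j + (k + j - 3).choose (k - 3) := by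
  cases j with
  | zero =>
    rw [pb_zero hk, bd_zero hk]
    have : k + 0 - 3 = k - 3 := by omega
    rw [this, Nat.choose_self]
  | succ j =>
    rw [pb_succ]
    unfold bd
    have h1 : k + (j + 1) - 2 = (k + j - 2) + 1 := by omega
    have h2 : k - 2 = (k - 3) + 1 := by omega
    have h3 : k + (j + 1) - 3 = k + j - 2 := by omega
    rw [h1, h2, h3, Nat.choose_succ_succ, Nat.add_comm]

lemma bd_split {k m : ℕ} (hk : 4 ≤ k) : bd k m = pb k m + bd (k - 1) m := by
  rw [bd_eq_pb_add (by omega : 3 ≤ k)]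
  congr 1
  unfold bd
  congr 1 
  all_goals omega

lemma self_le_bd {k i : ℕ} (hk : 3 ≤ k) : i ≤ bd k i := by
  unfold bd
  have h1 : (k + i - 2) - (k - 2) = i := by omega
  have h2 : k - 2 ≤ k + i - 2 := by omega
  have := Nat.choose_symm h2
  rw [h1] at this
  rw [← this]
  calc i ≤ (i+1).choose i := by rw [Nat.choose_succ_self_right]; omega
  _ ≤ (k + i - 2).choose i := Nat.choose_le_choose _ (by omega)

lemma jix_le_iff {k i m : ℕ} (hk : 3 ≤ k) : jix k i ≤ m ↔ i ≤ bd k m := by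
  constructor
  · intro h
    have hne : {j | i ≤ bd k j}.Nonempty := ⟨i, self_le_bd hk⟩
    have : i ≤ bd k (jix k i) := Nat.sInf_mem hne
    exact this.trans (bd_mono h)
  · intro h
    exact Nat.sInf_le h

lemma lt_jix_iff {k i m : ℕ} (hk : 3 ≤ k) : m < jix k i ↔ bd k m < i := by
  rw [← Nat.not_le, ← Nat.not_le, jix_le_iff hk]

lemma jix_eq {k i j : ℕ} (hk : 3 ≤ k) (h1 : pb k j < i) (h2 : i ≤ bd k j) :
    jix k i = j := by
  have hle : jix k i ≤ j := (jix_le_iff hk).2 h2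
  cases j with
  | zero => omega
  | succ j' =>
    have : j' < jix k i := (lt_jix_iff hk).2 (by rwa [pb_succ] at h1)
    omega


/-- `Nx k x` = number of indices `i ≥ 1` with `dd k i ≤ x`. -/
noncomputable def Nx (k x : ℕ) : ℕ := if x = 0 then 0 else bd k (Nat.log 2 x)

lemma lt_dd_iff {k i x : ℕ} (hk : 3 ≤ k) (hi : 1 ≤ i) : x < dd k i ↔ Nx k x < i := by
  unfold dd Nx
  rcases Nat.eq_zero_or_pos x with rfl | hx
  · simp only [eq_self_iff_true, if_true]
    constructor
    · intro _; omega
    · intro _; exact Nat.pow_pos (by omega)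
  · rw [if_neg (by omega), ← Nat.log_lt_iff_lt_pow one_lt_two (by omega),
      ← lt_jix_iff hk]

lemma count_dd {k n x : ℕ} (hk : 3 ≤ k) :
    ((Icc 1 n).filter (fun i => x < dd k i)).card = n - Nx k x := by
  have : (Icc 1 n).filter (fun i => x < dd k i) = Icc (Nx k x + 1) n := by
    ext i
    simp only [mem_filter, mem_Icc]
    constructor
    · rintro ⟨⟨h1, h2⟩, h3⟩
      rw [lt_dd_iff hk h1] at h3
      omega
    · rintro ⟨h1, h2⟩
      have hi : 1 ≤ i := by omega
      refine ⟨⟨hi, h2⟩, ?_⟩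
      rw [lt_dd_iff hk hi]
      omega
  rw [this, Nat.card_Icc]
  omega

/-- layer cake -/
lemma sum_layer {n B : ℕ} (f : ℕ → ℕ) (hB : ∀ i ∈ Icc 1 n, f i < B) :
    ∑ i ∈ Icc 1 n, f i = ∑ x ∈ range B, ((Icc 1 n).filter (fun i => x < f i)).card := by
  have h1 : ∀ x, ((Icc 1 n).filter (fun i => x < f i)).card
      = ∑ i ∈ Icc 1 n, if x < f i then 1 else 0 := by
    intro x; rw [Finset.card_filter]
  simp only [h1]
  rw [Finset.sum_comm]
  apply Finset.sum_congr rfl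
  intro i hi
  have : ∑ x ∈ range B, (if x < f i then 1 else 0) = ((range B).filter (fun x => x < f i)).card := by
    rw [Finset.card_filter]
  rw [this]
  have : (range B).filter (fun x => x < f i) = range (f i) := by
    ext x
    simp only [mem_filter, mem_range]
    have := hB i hi
    omega
  rw [this, Finset.card_range]

lemma nx_merge {k x : ℕ} (hk : 4 ≤ k) : Nx k x = Nx k (x / 2) + Nx (k - 1) x := by
  have hk3 : 3 ≤ k := by omega
  rcases Nat.lt_or_ge x 2 with hx | hx
  · interval_cases x
    · simp [Nx]
    · have h12 : (1:ℕ) / 2 = 0 := rfl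
      rw [h12]
      simp only [Nx, if_neg one_ne_zero, eq_self_iff_true, if_true]
      rw [Nat.log_one_right, bd_zero hk3, bd_zero (by omega : 3 ≤ k - 1)]
  · have hx0 : x ≠ 0 := by omega
    have hx2 : x / 2 ≠ 0 := by omega
    have hl : 1 ≤ Nat.log 2 x := by
      rw [Nat.le_log_iff_pow_le one_lt_two hx0]; simpa using hx
    simp only [Nx, if_neg hx0, if_neg hx2]
    rw [Nat.log_div_base]
    set l := Nat.log 2 x with hldef
    -- bd k l = bd k (l-1) + bd (k-1) l
    unfold bd
    have h1 : k + l - 2 = (k + l - 3) + 1 := by omega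
    have h2 : k - 2 = (k - 3) + 1 := by omega
    have h3 : k + (l - 1) - 2 = k + l - 3 := by omega
    have h4 : k - 1 + l - 2 = k + l - 3 := by omega
    have h5 : k - 1 - 2 = k - 3 := by omega
    rw [h1, h2, h3, h4, h5, Nat.choose_succ_succ]
    have h6 : (k + l - 3).choose (k - 3 + 1) = (k + l - 3).choose (k - 2) := by
      congr 1; omega
    rw [h6, Nat.add_comm]

lemma jix_le_self {k i : ℕ} (hk : 3 ≤ k) : jix k i ≤ i :=
  (jix_le_iff hk).2 (self_le_bd hk)

lemma count_two_dd {k m x : ℕ} (hk : 3 ≤ k) :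
    ((Icc 1 m).filter (fun i => x < 2 * dd k i)).card = m - Nx k (x / 2) := by
  have : ∀ i, (x < 2 * dd k i) = (x / 2 < dd k i) := by
    intro i
    have : x < 2 * dd k i ↔ x / 2 < dd k i := by omega
    simp [this]
  simp only [this]
  exact count_dd hk


lemma F_zero {k : ℕ} : F k 0 = 0 := by simp [F]

lemma F_succ {k n : ℕ} : F k (n + 1) = F k n + dd k (n + 1) :=
  Finset.sum_Icc_succ_top (by omega) _

lemma jix_one {k : ℕ} (hk : 3 ≤ k) : jix k 1 = 0 :=
  Nat.le_zero.1 ((jix_le_iff hk).2 (by rw [bd_zero hk]))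

lemma F_one {k : ℕ} (hk : 3 ≤ k) : F k 1 = 1 := by
  have : F k 1 = F k 0 + dd k 1 := F_succ
  rw [F_zero, dd, jix_one hk] at this
  simpa using this

lemma dd_bound {k i n : ℕ} (hk : 3 ≤ k) (hi : i ≤ n) : dd k i ≤ 2 ^ n := by
  calc dd k i = 2 ^ jix k i := rfl
  _ ≤ 2 ^ i := Nat.pow_le_pow_right (by omega) (jix_le_self hk)
  _ ≤ 2 ^ n := Nat.pow_le_pow_right (by omega) hi

lemma F_layer {k n B : ℕ} (hk : 3 ≤ k) (hB : 2 ^ n < B) :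
    F k n = ∑ x ∈ range B, (n - Nx k x) := by
  have hbd : ∀ i ∈ Icc 1 n, dd k i < B := by
    intro i hi
    have h := dd_bound (n := n) hk (mem_Icc.1 hi).2
    omega
  rw [F, sum_layer (dd k) hbd]
  exact Finset.sum_congr rfl fun x _ => count_dd hk

lemma F_layer2 {k n B : ℕ} (hk : 3 ≤ k) (hB : 2 ^ (n + 1) < B) :
    2 * F k n = ∑ x ∈ range B, (n - Nx k (x / 2)) := by
  have hbd : ∀ i ∈ Icc 1 n, 2 * dd k i < B := by
    intro i hi
    have h := dd_bound (n := n) hk (mem_Icc.1 hi).2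
    have h2 : (2:ℕ) ^ (n + 1) = 2 * 2 ^ n := by ring
    omega
  rw [F, Finset.mul_sum]
  rw [sum_layer (fun i => 2 * dd k i) hbd]
  exact Finset.sum_congr rfl fun x _ => count_two_dd hk

/-- Lower bound: every split is at least `F k n`. -/
lemma F_lower {k t n : ℕ} (hk : 4 ≤ k) (ht1 : 1 ≤ t) (ht2 : t ≤ n) :
    F k n ≤ 2 * F k (n - t) + F (k - 1) t := by
  have hk3 : 3 ≤ k := by omega
  have hk13 : 3 ≤ k - 1 := by omega
  set B := 2 ^ (n + 2) with hBdef
  have hB1 : 2 ^ n < B := Nat.pow_lt_pow_right one_lt_two (by omega)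
  have hB2 : 2 ^ (n - t + 1) < B := Nat.pow_lt_pow_right one_lt_two (by omega)
  have hB3 : 2 ^ t < B := Nat.pow_lt_pow_right one_lt_two (by omega)
  rw [F_layer hk3 hB1, F_layer2 hk3 hB2, F_layer hk13 hB3,
    ← Finset.sum_add_distrib]
  apply Finset.sum_le_sum
  intro x _
  have hmg := nx_merge (x := x) hk
  omega

/-- Exact split achieving `F k n`. -/
lemma F_split {k n : ℕ} (hk : 4 ≤ k) (hn : 1 ≤ n) :
    ∃ t, 1 ≤ t ∧ t ≤ n ∧ 2 * F k (n - t) + F (k - 1) t = F k n := by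
  have hk3 : 3 ≤ k := by omega
  have hk13 : 3 ≤ k - 1 := by omega
  set j := jix k n with hjdef
  have hnle : n ≤ bd k j := (jix_le_iff hk3).1 le_rfl
  have hlow : ∀ m, m < j → bd k m < n := fun m hm => (lt_jix_iff hk3).1 hm
  rcases Nat.eq_zero_or_pos j with hj0 | hj1
  · -- j = 0 : n = 1, t = 1
    have hb0 : bd k 0 = 1 := bd_zero hk3
    have hn1 : n = 1 := by rw [hj0] at hnle; omega
    refine ⟨1, le_rfl, by omega, ?_⟩
    rw [hn1]
    simp only [Nat.sub_self]
    rw [F_zero, F_one hk13, F_one hk3]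
  · -- main case, 1 ≤ j
    set P := bd k (j - 1) with hPdef
    have hPn : P < n := hlow _ (by omega)
    have hsplitj : bd k j = P + bd (k - 1) j := by
      rw [bd_split hk, hPdef]
      congr 1
      rw [← pb_succ (k := k) (j := j - 1)]
      congr 1
      omega
    set a := bd (k - 1) (j - 1) with hadef
    set b := n - P with hbdef
    set t := max a b with htdef
    have ha1 : 1 ≤ a := bd_pos hk13
    have han : a ≤ n := by
      have h1 : bd (k - 1) (j - 1) ≤ bd k (j - 1) := by
        rw [bd_split hk]; omega
      omega
    have hbn : b ≤ n := by omega
    have ht1 : 1 ≤ t := le_trans ha1 (le_max_left _ _)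
    have htn : t ≤ n := max_le han hbn
    refine ⟨t, ht1, htn, ?_⟩
    set B := 2 ^ (n + 2) with hBdef
    have hB1 : 2 ^ n < B := Nat.pow_lt_pow_right one_lt_two (by omega)
    have hB2 : 2 ^ (n - t + 1) < B := Nat.pow_lt_pow_right one_lt_two (by omega)
    have hB3 : 2 ^ t < B := Nat.pow_lt_pow_right one_lt_two (by omega)
    rw [F_layer hk3 hB1, F_layer2 hk3 hB2, F_layer hk13 hB3,
      ← Finset.sum_add_distrib]
    apply Finset.sum_congr rfl
    intro x _
    have hmg := nx_merge (x := x) hk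
    -- the disjunction
    have hD : (Nx k (x / 2) ≤ n - t ∧ Nx (k - 1) x ≤ t) ∨
        (n - t ≤ Nx k (x / 2) ∧ t ≤ Nx (k - 1) x) := by
      rcases Nat.eq_zero_or_pos x with rfl | hx
      · left
        constructor <;> simp [Nx]
      · have hx0 : x ≠ 0 := by omega
        set l := Nat.log 2 x with hldef
        have hNx1 : Nx (k - 1) x = bd (k - 1) l := by
          rw [Nx, if_neg hx0]
        rcases Nat.lt_or_ge l j with hlj | hlj
        · -- x small : left disjunct
          left
          constructor
          · -- Nx k (x/2) ≤ n - t
            rcases Nat.lt_or_ge x 2 with hx2 | hx2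
            · have hx1 : x = 1 := by omega
              subst hx1
              simp [Nx]
            · have hxd : x / 2 ≠ 0 := by omega
              have hl1 : 1 ≤ l := by
                rw [hldef, Nat.le_log_iff_pow_le one_lt_two hx0]
                simpa using hx2
              have hj2 : 2 ≤ j := by omega
              have hNx2 : Nx k (x / 2) = bd k (l - 1) := by
                rw [Nx, if_neg hxd, Nat.log_div_base, ← hldef]
              rw [hNx2]
              have h1 : bd k (l - 1) ≤ bd k (j - 2) := bd_mono (by omega)
              -- t + bd k (j-2) ≤ n
              have hsplitj1 : bd k (j - 1) = bd k (j - 2) + bd (k - 1) (j - 1) := by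
                rw [bd_split hk]
                congr 1
                rw [← pb_succ (k := k) (j := j - 2)]
                congr 1
                omega
              have hPn1 : bd k (j - 1) < n := hlow _ (by omega)
              have hmono : bd k (j - 2) ≤ bd k (j - 1) := bd_mono (by omega)
              omega
          · -- Nx (k-1) x ≤ t
            rw [hNx1]
            have : bd (k - 1) l ≤ a := bd_mono (by omega)
            omega
        · -- x large : right disjunct
          right
          have hxl : 2 ≤ x := by
            have h1 : 2 ^ l ≤ x := by
              rw [hldef]; exact Nat.pow_log_le_self 2 hx0
            have h2 : 2 ≤ 2 ^ l := by
              calc (2:ℕ) = 2 ^ 1 := rfl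
              _ ≤ 2 ^ l := Nat.pow_le_pow_right (by omega) (by omega)
            omega
          have hxd : x / 2 ≠ 0 := by omega
          have hNx2 : Nx k (x / 2) = bd k (l - 1) := by
            rw [Nx, if_neg hxd, Nat.log_div_base, ← hldef]
          constructor
          · -- n - t ≤ Nx k (x/2)
            rw [hNx2]
            have h1 : P ≤ bd k (l - 1) := bd_mono (by omega)
            have h2 : b ≤ t := le_max_right _ _
            omega
          · -- t ≤ Nx (k-1) x
            rw [hNx1]
            have h1 : a ≤ bd (k - 1) l := bd_mono (by omega)
            have h2 : b ≤ bd (k - 1) j := by omega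
            have h3 : bd (k - 1) j ≤ bd (k - 1) l := bd_mono (by omega)
            omega
    omega


lemma F_add_block {k a v : ℕ} :
    ∀ c, (∀ i, a < i → i ≤ a + c → dd k i = v) → F k (a + c) = F k a + c * v := by
  intro c
  induction c with
  | zero => intro _; simp
  | succ c ih =>
    intro h
    have h1 : a + (c + 1) = (a + c) + 1 := by omega
    rw [h1, F_succ, ih (fun i hi1 hi2 => h i hi1 (by omega)),
      h (a + c + 1) (by omega) (by omega)]
    ring

lemma F_pb {k : ℕ} (hk : 3 ≤ k) :
    ∀ j, F k (pb k j) = ∑ m ∈ range j, (k + m - 3).choose (k - 3) * 2 ^ m := by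
  intro j
  induction j with
  | zero => rw [pb_zero hk]; simp [F_zero]
  | succ j ih =>
    rw [pb_succ, Finset.sum_range_succ, ← ih]
    have hblk : bd k j = pb k j + (k + j - 3).choose (k - 3) := bd_eq_pb_add hk
    rw [hblk]
    apply F_add_block
    intro i hi1 hi2
    rw [dd, jix_eq hk hi1 (by rw [hblk]; omega)]

lemma F_cf {k j n : ℕ} (hk : 3 ≤ k) (h1 : (k + j - 3).choose (k - 2) < n)
    (h2 : n ≤ (k + j - 2).choose (k - 2)) :
    F k n = (∑ m ∈ Finset.range j, (k + m - 3).choose (k - 3) * 2 ^ m)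
        + (n - (k + j - 3).choose (k - 2)) * 2 ^ j := by
  have h1' : pb k j < n := h1
  have h2' : n ≤ bd k j := h2
  have hn : n = pb k j + (n - pb k j) := by omega
  rw [hn, F_add_block (n - pb k j) (fun i hi1 hi2 => by
      rw [dd, jix_eq hk hi1 (by omega)]), F_pb hk j]
  have hpbe : pb k j = (k + j - 3).choose (k - 2) := rfl
  congr 2
  omega

lemma F_three {n : ℕ} : F 3 n = 2 ^ n - 1 := by
  induction n with
  | zero => simp [F_zero]
  | succ n ih =>
    have hpb : pb 3 n = n := by
      unfold pb
      have h : 3 + n - 3 = n := by omega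
      rw [h, Nat.choose_one_right]
    have hbd : bd 3 n = n + 1 := by
      unfold bd
      have h : 3 + n - 2 = n + 1 := by omega
      rw [h, Nat.choose_one_right]
    rw [F_succ, ih, dd, jix_eq (j := n) (le_refl 3) (by omega) (by omega)]
    have := Nat.one_le_two_pow (n := n)
    have h2 : (2:ℕ) ^ (n + 1) = 2 * 2 ^ n := by ring
    omega

/-- Main lemma: any `H` satisfying the recurrence with base `2^n - 1` equals `F`. -/
lemma H_eq_F (H : ℕ → ℕ → ℕ) (h0 : ∀ k', H k' 0 = 0)
    (h3 : ∀ n, H 3 n = 2 ^ n - 1)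
    (hrec : ∀ k', 4 ≤ k' → ∀ n, 1 ≤ n →
      H k' n = sInf {v | ∃ t, 1 ≤ t ∧ t ≤ n ∧ v = 2 * H k' (n - t) + H (k' - 1) t}) :
    ∀ k, 3 ≤ k → ∀ n, H k n = F k n := by
  intro k hk
  induction k, hk using Nat.le_induction with
  | base => intro n; rw [h3, F_three]
  | succ k hk IH =>
    intro n
    induction n using Nat.strong_induction_on with
    | _ n ih =>
      rcases Nat.eq_zero_or_pos n with rfl | hn
      · rw [h0, F_zero]
      · rw [hrec (k + 1) (by omega) n hn]
        have hsimp : k + 1 - 1 = k := by omega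
        have hmem : F (k + 1) n ∈
            {v | ∃ t, 1 ≤ t ∧ t ≤ n ∧ v = 2 * H (k + 1) (n - t) + H (k + 1 - 1) t} := by
          obtain ⟨t, ht1, ht2, heq⟩ := F_split (k := k + 1) (by omega) hn
          refine ⟨t, ht1, ht2, ?_⟩
          rw [ih (n - t) (by omega), hsimp, IH t]
          rw [← heq]
          congr 1
        have hlb : ∀ v ∈
            {v | ∃ t, 1 ≤ t ∧ t ≤ n ∧ v = 2 * H (k + 1) (n - t) + H (k + 1 - 1) t},
            F (k + 1) n ≤ v := by
          rintro v ⟨t, ht1, ht2, rfl⟩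
          rw [ih (n - t) (by omega), hsimp, IH t]
          have : k + 1 - 1 = k := hsimp
          exact le_of_le_of_eq (F_lower (by omega) ht1 ht2) (by rw [this])
        exact le_antisymm (Nat.sInf_le hmem)
          (hlb _ (Nat.sInf_mem ⟨_, hmem⟩))

end FSaux

/-- With p_i = 2 and q_i = 1, the generalized Frame–Stewart numbers G_k have the
stated closed form on binomial intervals, and coincide with the classical
Frame–Stewart numbers S_k. -/
theorem generalized_frame_stewart_p_two
    (k : ℕ) (hk : 3 ≤ k)
    (G : ℕ → ℕ → ℕ)
    (hG0 : ∀ k', G k' 0 = 0)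
    (hG3 : ∀ n, 1 ≤ n → G 3 n = 2 * G 3 (n - 1) + 1)
    (hGk : ∀ k', 4 ≤ k' → ∀ n, 1 ≤ n →
      G k' n = sInf {v | ∃ t, 1 ≤ t ∧ t ≤ n ∧ v = 2 * G k' (n - t) + G (k' - 1) t})
    (S : ℕ → ℕ → ℕ)
    (hS0 : ∀ k', S k' 0 = 0)
    (hS3 : ∀ n, 1 ≤ n → S 3 n = 2 ^ n - 1)
    (hSk : ∀ k', 4 ≤ k' → ∀ n, 1 ≤ n →
      S k' n = sInf {v | ∃ t, 1 ≤ t ∧ t ≤ n ∧ v = 2 * S k' (n - t) + S (k' - 1) t})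
    (j n : ℕ) (hn : 1 ≤ n)
    (h1 : (k + j - 3).choose (k - 2) < n) (h2 : n ≤ (k + j - 2).choose (k - 2)) :
    G k n = (∑ m ∈ Finset.range j, (k + m - 3).choose (k - 3) * 2 ^ m)
        + (n - (k + j - 3).choose (k - 2)) * 2 ^ j
      ∧ ∀ m', G k m' = S k m' := by
  have hG3' : ∀ m, G 3 m = 2 ^ m - 1 := by
    intro m
    induction m with
    | zero => rw [hG0]; rfl
    | succ m ih =>
      rw [hG3 (m + 1) (by omega)]
      simp only [Nat.add_sub_cancel]
      rw [ih]
      have := Nat.one_le_two_pow (n := m)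
      have h2 : (2:ℕ) ^ (m + 1) = 2 * 2 ^ m := by ring
      omega
  have hS3' : ∀ m, S 3 m = 2 ^ m - 1 := by
    intro m
    rcases Nat.eq_zero_or_pos m with rfl | hm
    · rw [hS0]; rfl
    · exact hS3 m hm
  have hGF := FSaux.H_eq_F G hG0 hG3' hGk k hk
  have hSF := FSaux.H_eq_F S hS0 hS3' hSk k hk
  constructor
  · rw [hGF n]
    exact FSaux.F_cf hk h1 h2
  · intro m'
    rw [hGF m', hSF m']
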